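/- Let a > b ≥ 0 be integers, let G be an (a,b)-regular graph on n vertices with adjacency matrix A, and let t be a positive integer. Then trace(A^{t+2}) ≥ n · Σ_{0 ≤ k < t/2} [t!/(k!·k!·(t−2k)!)] · (1/(k+1)) · b^{t−2k} · (a−b−1)^k. -/

import Mathlib

open scoped Classical
open Finset Polynomial

noncomputable section

namespace PaperStmt

variable {V : Type}

/-- The degree of a vertex in a finite simple graph. -/
def degR [Fintype V] (G : SimpleGraph V) (v : V) : ℕ :=
  (Finset.univ.filter (fun u => G.Adj v u)).card

/-- The link of a vertex: the subgraph induced on the neighbor set. -/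
def link (G : SimpleGraph V) (v : V) : SimpleGraph (G.neighborSet v) :=
  SimpleGraph.induce (G.neighborSet v) G

/-- `G` is `(a,b)`-regular: `a`-regular, and the link of every vertex is `b`-regular. -/
def IsABRegular [Fintype V] (G : SimpleGraph V) (a b : ℕ) : Prop :=
  (∀ v, degR G v = a) ∧ ∀ v : V, ∀ u : G.neighborSet v, degR (link G v) u = b

/-- The adjacency matrix over `ℝ`. -/
def adjMat [Fintype V] (G : SimpleGraph V) : Matrix V V ℝ :=
  Matrix.of fun u v => if G.Adj u v then (1 : ℝ) else 0

/-- The eigenvalues of the adjacency matrix (with multiplicity), in decreasing order,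
so that `λ_k = (eigList G).getD (k-1) 0`. -/
def eigList [Fintype V] [DecidableEq V] (G : SimpleGraph V) : List ℝ :=
  (((adjMat G).charpoly.roots).sort (· ≤ ·)).reverse

/-- `λ₂(G)`, the second largest adjacency eigenvalue. -/
def lambda2 [Fintype V] [DecidableEq V] (G : SimpleGraph V) : ℝ :=
  (eigList G).getD 1 0

/-- `λ(G) = max_{i ≥ 2} |λ_i(G)|`. -/
def lambdaMax [Fintype V] [DecidableEq V] (G : SimpleGraph V) : ℝ :=
  (((eigList G).drop 1).map (fun x => |x|)).foldr max 0

/-- `H` is a `δ`-edge expander: every vertex set `U` has at least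
`δ · min(|U|, |Uᶜ|)` edges to its complement. -/
def IsEdgeExpander [Fintype V] (H : SimpleGraph V) (δ : ℝ) : Prop :=
  ∀ U : Finset V,
    δ * min (U.card : ℝ) (((Finset.univ \ U).card : ℝ)) ≤
      (((U ×ˢ (Finset.univ \ U)).filter (fun p => H.Adj p.1 p.2)).card : ℝ)

/-- The polygraph `G_S` on `V(G)^m`, `m = |S|`: two tuples are adjacent iff
their multiset of coordinatewise distances equals `S`. -/
def polygraph (G : SimpleGraph V) (S : Multiset ℕ) :
    SimpleGraph (Fin (Multiset.card S) → V) where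
  Adj x y := x ≠ y ∧
    Multiset.map (fun i => G.dist (x i) (y i)) (Finset.univ.val) = S
  symm := by
    constructor
    rintro x y ⟨hne, h⟩
    refine ⟨hne.symm, ?_⟩
    have hfun : (fun i => G.dist (y i) (x i)) = fun i => G.dist (x i) (y i) := by
      funext i; exact SimpleGraph.dist_comm
    rw [hfun]; exact h
  loopless := by constructor; rintro x ⟨h, -⟩; exact h rfl

/-- The number of vertices at distance `l` from a fixed vertex of the `d`-regular tree. -/
def Nd (d l : ℕ) : ℕ := if l = 0 then 1 else d * (d - 1) ^ (l - 1)

/-- The multinomial coefficient `m!/(m₁!⋯m_k!)` attached to a multiset `S` of size `m`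
whose distinct values have multiplicities `m₁,…,m_k`. -/
def multinom (S : Multiset ℕ) : ℕ :=
  (Multiset.card S).factorial / ∏ x ∈ S.toFinset, (S.count x).factorial

/-- The Geronimus polynomials (as functions), for parameter `d`. -/
def geronimus (d : ℕ) : ℕ → ℝ → ℝ
  | 0 => fun _ => 1
  | 1 => fun x => x
  | 2 => fun x => x ^ 2 - d
  | (t + 3) => fun x => x * geronimus d (t + 2) x - ((d : ℝ) - 1) * geronimus d (t + 1) x

/-- The graph on `L` where two distinct vertices are adjacent iff they have a
common neighbor in `H`. -/
def commonNbrGraph {W : Type} (H : SimpleGraph W) (L : Set W) : SimpleGraph L where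
  Adj x y := x ≠ y ∧ ∃ w : W, H.Adj x w ∧ H.Adj y w
  symm := by constructor; rintro x y ⟨hne, w, h1, h2⟩; exact ⟨hne.symm, w, h2, h1⟩
  loopless := by constructor; rintro x ⟨h, -⟩; exact h rfl

/-- `w : ℕ → V` describes a non-backtracking walk of length `t` in `G`
(only the values `w 0, …, w t` matter). -/
def IsNBWalk (G : SimpleGraph V) (t : ℕ) (w : ℕ → V) : Prop :=
  (∀ i < t, G.Adj (w i) (w (i + 1))) ∧ ∀ i, 0 < i → i < t → w (i + 1) ≠ w (i - 1)

/-- The graph `H_t` on `V(G)` where distinct `u, v` are adjacent iff there is a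
non-backtracking walk of length `t` from `u` to `v` in `G`. -/
def ntWalkGraph (G : SimpleGraph V) (t : ℕ) : SimpleGraph V :=
  SimpleGraph.fromRel (fun u v => ∃ w : ℕ → V, w 0 = u ∧ w t = v ∧ IsNBWalk G t w)

/-- The auxiliary graph on the edges of `H`: two distinct edges are adjacent iff
their union spans a triangle of `H`. -/
def auxGraph {X : Type} (H : SimpleGraph X) : SimpleGraph H.edgeSet where
  Adj e f := e ≠ f ∧ ∃ x y z : X, H.Adj x y ∧ H.Adj x z ∧ H.Adj y z ∧
      ((e : Sym2 X) = s(x, y) ∨ (e : Sym2 X) = s(x, z) ∨ (e : Sym2 X) = s(y, z)) ∧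
      ((f : Sym2 X) = s(x, y) ∨ (f : Sym2 X) = s(x, z) ∨ (f : Sym2 X) = s(y, z))
  symm := by
    constructor
    rintro e f ⟨hne, x, y, z, h1, h2, h3, he, hf⟩
    exact ⟨hne.symm, x, y, z, h1, h2, h3, hf, he⟩
  loopless := by constructor; rintro e ⟨h, -⟩; exact h rfl

/-- The ordered triangles of a finite graph. -/
def triangleFinset {X : Type} [Fintype X] (H : SimpleGraph X) : Finset (X × X × X) :=
  Finset.univ.filter (fun t => H.Adj t.1 t.2.1 ∧ H.Adj t.1 t.2.2 ∧ H.Adj t.2.1 t.2.2)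

/-- The complete tripartite graph `K_{d,d,d}`. -/
def tripartite (d : ℕ) : SimpleGraph (Fin 3 × Fin d) where
  Adj u v := u.1 ≠ v.1
  symm := ⟨fun _ _ h => Ne.symm h⟩
  loopless := ⟨fun _ h => h rfl⟩



section AuxProof
open List


/-- Decorated steps: level (label `Fin b`), up (label `Fin c`), down. -/
abbrev DStep (b c : ℕ) := Sum (Fin b) (Sum (Fin c) Unit)

variable {b c : ℕ}

/-- `Ok h l`: starting at height `h`, the step list `l` stays nonnegative and ends at 0. -/
def Ok : ℕ → List (DStep b c) → Prop
  | h, [] => h = 0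
  | h, (Sum.inl _) :: l => Ok h l
  | h, (Sum.inr (Sum.inl _)) :: l => Ok (h + 1) l
  | 0, (Sum.inr (Sum.inr _)) :: _ => False
  | (h + 1), (Sum.inr (Sum.inr _)) :: l => Ok h l

/-- Analogue for Dyck step lists. -/
def OkW : ℕ → List DyckStep → Prop
  | h, [] => h = 0
  | h, DyckStep.U :: w => OkW (h + 1) w
  | 0, DyckStep.D :: _ => False
  | (h + 1), DyckStep.D :: w => OkW h w

lemma okw_of_counts : ∀ (l : List DyckStep) (h : ℕ),
    (∀ i, (l.take i).count DyckStep.D ≤ (l.take i).count DyckStep.U + h) →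
    (l.count DyckStep.U + h = l.count DyckStep.D) → OkW h l := by
  intro l
  induction l with
  | nil => intro h _ htot; simp only [OkW]; simpa using htot
  | cons x l ih =>
    intro h hpre htot
    cases x with
    | U =>
      simp only [OkW]
      apply ih
      · intro i
        have := hpre (i + 1)
        simp [List.count_cons] at this ⊢
        omega
      · have := htot
        simp [List.count_cons] at this ⊢
        omega
    | D =>
      have h1 := hpre 1
      simp [List.count_cons] at h1
      obtain ⟨h', rfl⟩ : ∃ h', h = h' + 1 := ⟨h - 1, by omega⟩
      simp only [OkW]
      apply ih
      · intro i
        have := hpre (i + 1)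
        simp [List.count_cons] at this ⊢
        omega
      · have := htot
        simp [List.count_cons] at this ⊢
        omega

lemma okw_dyck (w : DyckWord) : OkW 0 w.toList := by
  apply okw_of_counts
  · intro i; simpa using w.count_D_le_count_U i
  · simpa using w.count_U_eq_count_D

/-- Interleave a mask, a Dyck word, level labels and up labels into a decorated step list. -/
def encode : List Bool → List DyckStep → List (Fin b) → List (Fin c) → List (DStep b c)
  | false :: m, w, x :: lv, up => Sum.inl x :: encode m w lv up
  | true :: m, DyckStep.U :: w, lv, y :: up => Sum.inr (Sum.inl y) :: encode m w lv up
  | true :: m, DyckStep.D :: w, lv, up => Sum.inr (Sum.inr ()) :: encode m w lv up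
  | _, _, _, _ => []

/-- The invariant ensuring `encode` never hits a garbage branch. -/
def Inv (m : List Bool) (w : List DyckStep) (lv : List (Fin b)) (up : List (Fin c)) : Prop :=
  m.count false = lv.length ∧ m.count true = w.length ∧ w.count DyckStep.U = up.length

def decodeM (l : List (DStep b c)) : List Bool :=
  l.map fun d => match d with | Sum.inl _ => false | _ => true

def decodeW (l : List (DStep b c)) : List DyckStep :=
  l.filterMap fun d => match d with
    | Sum.inr (Sum.inl _) => some DyckStep.U
    | Sum.inr (Sum.inr _) => some DyckStep.D
    | _ => none

def decodeLv (l : List (DStep b c)) : List (Fin b) :=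
  l.filterMap fun d => match d with | Sum.inl x => some x | _ => none

def decodeUp (l : List (DStep b c)) : List (Fin c) :=
  l.filterMap fun d => match d with | Sum.inr (Sum.inl y) => some y | _ => none

lemma encode_spec : ∀ (m : List Bool) (w : List DyckStep) (lv : List (Fin b))
    (up : List (Fin c)), Inv m w lv up →
    decodeM (encode m w lv up) = m ∧ decodeW (encode m w lv up) = w ∧
      decodeLv (encode m w lv up) = lv ∧ decodeUp (encode m w lv up) = up := by
  intro m
  induction m with
  | nil =>
    rintro w lv up ⟨h1, h2, h3⟩
    obtain rfl : w = [] := List.length_eq_zero_iff.mp (by simpa using h2.symm)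
    obtain rfl : lv = [] := List.length_eq_zero_iff.mp (by simpa using h1.symm)
    obtain rfl : up = [] := List.length_eq_zero_iff.mp (by simpa using h3.symm)
    simp [encode, decodeM, decodeW, decodeLv, decodeUp]
  | cons x m ih =>
    rintro w lv up ⟨h1, h2, h3⟩
    cases x with
    | false =>
      simp [List.count_cons] at h1 h2
      obtain ⟨z, lv, rfl⟩ : ∃ z lv0, lv = z :: lv0 := by
        cases lv with
        | nil => simp at h1
        | cons z lv0 => exact ⟨z, lv0, rfl⟩
      obtain ⟨e1, e2, e3, e4⟩ := ih w lv up ⟨by simpa using h1, by simpa using h2, h3⟩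
      simp only [encode, decodeM, decodeW, decodeLv, decodeUp, List.map_cons,
        List.filterMap_cons] at e1 e2 e3 e4 ⊢
      exact ⟨by rw [e1], by rw [e2], by rw [e3], by rw [e4]⟩
    | true =>
      simp [List.count_cons] at h1 h2
      obtain ⟨s, w, rfl⟩ : ∃ s ws, w = s :: ws := by
        cases w with
        | nil => simp at h2
        | cons s ws => exact ⟨s, ws, rfl⟩
      cases s with
      | U =>
        simp [List.count_cons] at h3
        obtain ⟨y, up, rfl⟩ : ∃ y us, up = y :: us := by
          cases up with
          | nil => simp at h3
          | cons y us => exact ⟨y, us, rfl⟩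
        obtain ⟨e1, e2, e3, e4⟩ := ih w lv up ⟨h1, by simpa using h2, by simpa using h3⟩
        simp only [encode, decodeM, decodeW, decodeLv, decodeUp, List.map_cons,
          List.filterMap_cons] at e1 e2 e3 e4 ⊢
        exact ⟨by rw [e1], by rw [e2], by rw [e3], by rw [e4]⟩
      | D =>
        obtain ⟨e1, e2, e3, e4⟩ := ih w lv up
          ⟨h1, by simpa using h2, by simpa [List.count_cons] using h3⟩
        simp only [encode, decodeM, decodeW, decodeLv, decodeUp, List.map_cons,
          List.filterMap_cons] at e1 e2 e3 e4 ⊢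
        exact ⟨by rw [e1], by rw [e2], by rw [e3], by rw [e4]⟩

lemma encode_inj {m m' : List Bool} {w w' : List DyckStep} {lv lv' : List (Fin b)}
    {up up' : List (Fin c)} (h : Inv m w lv up) (h' : Inv m' w' lv' up')
    (he : encode m w lv up = encode m' w' lv' up') :
    m = m' ∧ w = w' ∧ lv = lv' ∧ up = up' := by
  obtain ⟨e1, e2, e3, e4⟩ := encode_spec m w lv up h
  obtain ⟨f1, f2, f3, f4⟩ := encode_spec m' w' lv' up' h'
  rw [he] at e1 e2 e3 e4
  exact ⟨e1.symm.trans f1, e2.symm.trans f2, e3.symm.trans f3, e4.symm.trans f4⟩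

lemma encode_length {m : List Bool} {w : List DyckStep} {lv : List (Fin b)}
    {up : List (Fin c)} (h : Inv m w lv up) : (encode m w lv up).length = m.length := by
  obtain ⟨e1, -, -, -⟩ := encode_spec m w lv up h
  have : (decodeM (encode m w lv up) : List Bool).length = (encode m w lv up).length := by
    simp [decodeM]
  rw [e1] at this
  exact this.symm

lemma encode_ok : ∀ (m : List Bool) (w : List DyckStep) (lv : List (Fin b))
    (up : List (Fin c)) (h : ℕ), Inv m w lv up → OkW h w → Ok h (encode m w lv up) := by
  intro m
  induction m with
  | nil =>
    rintro w lv up h ⟨h1, h2, h3⟩ hw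
    obtain rfl : w = [] := List.length_eq_zero_iff.mp (by simpa using h2.symm)
    simp only [OkW] at hw
    simp [encode, Ok, hw]
  | cons x m ih =>
    rintro w lv up h ⟨h1, h2, h3⟩ hw
    cases x with
    | false =>
      simp [List.count_cons] at h1 h2
      obtain ⟨z, lv, rfl⟩ : ∃ z lv0, lv = z :: lv0 := by
        cases lv with
        | nil => simp at h1
        | cons z lv0 => exact ⟨z, lv0, rfl⟩
      simp only [encode, Ok]
      exact ih w lv up h ⟨by simpa using h1, by simpa using h2, h3⟩ hw
    | true =>
      simp [List.count_cons] at h1 h2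
      obtain ⟨s, w, rfl⟩ : ∃ s ws, w = s :: ws := by
        cases w with
        | nil => simp at h2
        | cons s ws => exact ⟨s, ws, rfl⟩
      cases s with
      | U =>
        simp [List.count_cons] at h3
        obtain ⟨y, up, rfl⟩ : ∃ y us, up = y :: us := by
          cases up with
          | nil => simp at h3
          | cons y us => exact ⟨y, us, rfl⟩
        simp only [encode, Ok]
        simp only [OkW] at hw
        exact ih w lv up (h + 1) ⟨h1, by simpa using h2, by simpa using h3⟩ hw
      | D =>
        obtain ⟨h', rfl⟩ : ∃ h', h = h' + 1 := by
          cases h with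
          | zero => exfalso; simpa only [OkW] using hw
          | succ h' => exact ⟨h', rfl⟩
        simp only [encode, Ok]
        simp only [OkW] at hw
        exact ih w lv up h' ⟨h1, by simpa using h2, by simpa [List.count_cons] using h3⟩ hw




variable {V : Type}

variable [Fintype V] [DecidableEq V]

def pickF (v₀ : V) (s : Finset V) (n : ℕ) (i : Fin n) : V :=
  if h : n ≤ s.card then (s.equivFin.symm (Fin.castLE h i) : V) else v₀

lemma pickF_mem {v₀ : V} {s : Finset V} {n : ℕ} (h : n ≤ s.card) (i : Fin n) :
    pickF v₀ s n i ∈ s := by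
  simp only [pickF, dif_pos h]
  exact Finset.coe_mem _

lemma pickF_inj {v₀ : V} {s : Finset V} {n : ℕ} (h : n ≤ s.card) {i j : Fin n}
    (hij : pickF v₀ s n i = pickF v₀ s n j) : i = j := by
  simp only [pickF, dif_pos h] at hij
  have := s.equivFin.symm.injective (Subtype.ext hij)
  exact Fin.castLE_injective h this

def levelSet (G : SimpleGraph V) (x y : V) : Finset V :=
  Finset.univ.filter fun u => G.Adj x u ∧ G.Adj y u

def upSet (G : SimpleGraph V) (x y : V) : Finset V :=
  Finset.univ.filter fun u => G.Adj x u ∧ ¬ G.Adj y u ∧ u ≠ y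

lemma card_levelSet {G : SimpleGraph V} {a b : ℕ} (hreg : IsABRegular G a b)
    {x y : V} (hxy : G.Adj x y) : (levelSet G x y).card = b := by
  have hx : x ∈ G.neighborSet y := hxy.symm
  have hb := hreg.2 y ⟨x, hx⟩
  unfold degR at hb
  rw [← hb]
  refine (Finset.card_bij (s := Finset.univ.filter fun u : ↥(G.neighborSet y) =>
    (link G y).Adj ⟨x, hx⟩ u) (t := levelSet G x y) (fun u _ => (u : V)) ?_ ?_ ?_).symm
  · rintro u hu
    simp only [Finset.mem_filter, Finset.mem_univ, true_and] at hu
    simp only [levelSet, Finset.mem_filter, Finset.mem_univ, true_and]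
    exact ⟨hu, u.2⟩
  · intro u hu u' hu' huu
    exact Subtype.ext huu
  · rintro u hu
    simp only [levelSet, Finset.mem_filter, Finset.mem_univ, true_and] at hu
    refine ⟨⟨u, hu.2⟩, ?_, rfl⟩
    simp only [Finset.mem_filter, Finset.mem_univ, true_and]
    exact hu.1

lemma card_upSet {G : SimpleGraph V} {a b : ℕ} (hreg : IsABRegular G a b)
    {x y : V} (hxy : G.Adj x y) : (upSet G x y).card = a - b - 1 := by
  have hdeg : (Finset.univ.filter fun u => G.Adj x u).card = a := hreg.1 x
  have hsplit := Finset.card_filter_add_card_filter_not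
    (s := Finset.univ.filter fun u => G.Adj x u) (p := fun u => G.Adj y u)
  rw [Finset.filter_filter, Finset.filter_filter, hdeg] at hsplit
  have h1 : (Finset.univ.filter fun u => G.Adj x u ∧ G.Adj y u).card = b :=
    card_levelSet hreg hxy
  have hsplit2 := Finset.card_filter_add_card_filter_not
    (s := Finset.univ.filter fun u => G.Adj x u ∧ ¬ G.Adj y u) (p := fun u => u = y)
  rw [Finset.filter_filter, Finset.filter_filter] at hsplit2
  have h2 : (Finset.univ.filter fun u => (G.Adj x u ∧ ¬ G.Adj y u) ∧ u = y).card = 1 := by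
    have : (Finset.univ.filter fun u => (G.Adj x u ∧ ¬ G.Adj y u) ∧ u = y) = {y} := by
      ext u
      simp only [Finset.mem_filter, Finset.mem_univ, true_and, Finset.mem_singleton]
      constructor
      · rintro ⟨-, rfl⟩; rfl
      · rintro rfl; exact ⟨⟨hxy, G.irrefl⟩, rfl⟩
    rw [this, Finset.card_singleton]
  have h3 : (Finset.univ.filter fun u => (G.Adj x u ∧ ¬ G.Adj y u) ∧ ¬ u = y)
      = upSet G x y := by
    ext u
    simp only [upSet, Finset.mem_filter, Finset.mem_univ, true_and]
    tauto
  rw [h2, h3] at hsplit2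
  have hlev : (Finset.univ.filter fun u => G.Adj x u ∧ G.Adj y u).card = b := h1
  omega

variable {a b : ℕ}

def levV (v₀ : V) (G : SimpleGraph V) (b : ℕ) (x y : V) (i : Fin b) : V :=
  pickF v₀ (levelSet G x y) b i

def upV (v₀ : V) (G : SimpleGraph V) (c : ℕ) (x y : V) (j : Fin c) : V :=
  pickF v₀ (upSet G x y) c j

lemma levV_mem {v₀ : V} {G : SimpleGraph V} (hreg : IsABRegular G a b)
    {x y : V} (hxy : G.Adj x y) (i : Fin b) :
    G.Adj x (levV v₀ G b x y i) ∧ G.Adj y (levV v₀ G b x y i) := by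
  have h := pickF_mem (v₀ := v₀) (le_of_eq (card_levelSet hreg hxy).symm) i
  simpa only [levV, levelSet, Finset.mem_filter, Finset.mem_univ, true_and] using h

lemma levV_inj {v₀ : V} {G : SimpleGraph V} (hreg : IsABRegular G a b)
    {x y : V} (hxy : G.Adj x y) {i j : Fin b}
    (h : levV v₀ G b x y i = levV v₀ G b x y j) : i = j :=
  pickF_inj (le_of_eq (card_levelSet hreg hxy).symm) h

lemma upV_mem {v₀ : V} {G : SimpleGraph V} (hreg : IsABRegular G a b)
    {x y : V} (hxy : G.Adj x y) (j : Fin (a - b - 1)) :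
    G.Adj x (upV v₀ G (a - b - 1) x y j) ∧ ¬ G.Adj y (upV v₀ G (a - b - 1) x y j)
      ∧ upV v₀ G (a - b - 1) x y j ≠ y := by
  have h := pickF_mem (v₀ := v₀) (le_of_eq (card_upSet hreg hxy).symm) j
  simpa only [upV, upSet, Finset.mem_filter, Finset.mem_univ, true_and] using h

lemma upV_inj {v₀ : V} {G : SimpleGraph V} (hreg : IsABRegular G a b)
    {x y : V} (hxy : G.Adj x y) {i j : Fin (a - b - 1)}
    (h : upV v₀ G (a - b - 1) x y i = upV v₀ G (a - b - 1) x y j) : i = j :=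
  pickF_inj (le_of_eq (card_upSet hreg hxy).symm) h


section Run

variable {a b : ℕ} (v₀ : V) (G : SimpleGraph V)

def run : List V → List (DStep b (a - b - 1)) → List V
  | x :: y :: rest, (Sum.inl i) :: l =>
      levV v₀ G b x y i :: run (levV v₀ G b x y i :: y :: rest) l
  | x :: y :: rest, (Sum.inr (Sum.inl j)) :: l =>
      upV v₀ G (a - b - 1) x y j :: run (upV v₀ G (a - b - 1) x y j :: x :: y :: rest) l
  | _ :: y :: rest, (Sum.inr (Sum.inr _)) :: l => y :: run (y :: rest) l
  | _, _ => []

end Run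


section RunLemmas

variable {a b : ℕ} {v₀ : V} {G : SimpleGraph V}

lemma run_spec (hreg : IsABRegular G a b) :
    ∀ (l : List (DStep b (a - b - 1))) (h : ℕ) (x y : V) (rest : List V),
    Ok h l → List.Chain' G.Adj (x :: y :: rest) → (x :: y :: rest).length = h + 2 →
    (run v₀ G (x :: y :: rest) l).length = l.length ∧
    List.Chain G.Adj x (run v₀ G (x :: y :: rest) l) ∧
    G.Adj ((run v₀ G (x :: y :: rest) l).getLastD x)
      ((y :: rest).getLast (List.cons_ne_nil _ _)) := by
  intro l
  induction l with
  | nil =>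
    intro h x y rest hOk hch hlen
    simp only [Ok] at hOk
    subst hOk
    obtain rfl : rest = [] := by
      simpa using List.length_eq_zero_iff.mp (by simpa using hlen)
    refine ⟨by simp [run], by simp [run, List.Chain], ?_⟩
    simpa [run] using (List.isChain_cons_cons.mp hch).1
  | cons d l ih =>
    intro h x y rest hOk hch hlen
    have hxy : G.Adj x y := (List.isChain_cons_cons.mp hch).1
    cases d with
    | inl i =>
      set z := levV v₀ G b x y i with hz
      obtain ⟨hz1, hz2⟩ := levV_mem hreg hxy i
      simp only [Ok] at hOk
      have hOk' : Ok h l := hOk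
      have hch' : List.Chain' G.Adj (z :: y :: rest) :=
        List.isChain_cons_cons.mpr ⟨hz2.symm, (List.isChain_cons_cons.mp hch).2⟩
      obtain ⟨ih1, ih2, ih3⟩ := ih h z y rest hOk' hch' (by simpa using hlen)
      refine ⟨?_, ?_, ?_⟩
      · simp only [run, List.length_cons]; exact congrArg (· + 1) ih1
      · exact List.chain_cons.mpr ⟨hz1, ih2⟩
      · simpa only [run, List.getLastD_cons] using ih3
    | inr d' =>
      cases d' with
      | inl j =>
        set z := upV v₀ G (a - b - 1) x y j with hz
        obtain ⟨hz1, hz2, hz3⟩ := upV_mem hreg hxy j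
        simp only [Ok] at hOk
        have hOk' : Ok (h + 1) l := hOk
        have hch' : List.Chain' G.Adj (z :: x :: y :: rest) :=
          List.isChain_cons_cons.mpr ⟨hz1.symm, hch⟩
        obtain ⟨ih1, ih2, ih3⟩ := ih (h + 1) z x (y :: rest) hOk' hch' (by simpa using hlen)
        refine ⟨?_, ?_, ?_⟩
        · simp only [run, List.length_cons]; exact congrArg (· + 1) ih1
        · exact List.chain_cons.mpr ⟨hz1, ih2⟩
        · have : ((x :: y :: rest).getLast (List.cons_ne_nil _ _))
              = ((y :: rest).getLast (List.cons_ne_nil _ _)) :=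
            List.getLast_cons (List.cons_ne_nil _ _)
          rw [← this]
          simpa only [run, List.getLastD_cons] using ih3
      | inr u =>
        obtain ⟨h', rfl⟩ : ∃ h', h = h' + 1 := by
          cases h with
          | zero => exact absurd hOk (by simp [Ok])
          | succ h' => exact ⟨h', rfl⟩
        obtain ⟨r1, rest', rfl⟩ : ∃ r1 rest0, rest = r1 :: rest0 := by
          cases rest with
          | nil => simp at hlen
          | cons r1 rest0 => exact ⟨r1, rest0, rfl⟩
        simp only [Ok] at hOk
        have hOk' : Ok h' l := hOk
        have hch' : List.Chain' G.Adj (y :: r1 :: rest') := (List.isChain_cons_cons.mp hch).2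
        obtain ⟨ih1, ih2, ih3⟩ := ih h' y r1 rest' hOk' hch' (by simpa using hlen)
        refine ⟨?_, ?_, ?_⟩
        · simp only [run, List.length_cons, ih1]
        · exact List.chain_cons.mpr ⟨hxy, ih2⟩
        · have : ((y :: r1 :: rest').getLast (List.cons_ne_nil _ _))
              = ((r1 :: rest').getLast (List.cons_ne_nil _ _)) :=
            List.getLast_cons (List.cons_ne_nil _ _)
          rw [← this] at ih3
          simpa only [run, List.getLastD_cons] using ih3

lemma run_inj (hreg : IsABRegular G a b) :
    ∀ (l l' : List (DStep b (a - b - 1))) (h : ℕ) (x y : V) (rest : List V),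
    Ok h l → Ok h l' → List.Chain' G.Adj (x :: y :: rest) →
    (x :: y :: rest).length = h + 2 →
    run v₀ G (x :: y :: rest) l = run v₀ G (x :: y :: rest) l' → l = l' := by
  intro l
  induction l with
  | nil =>
    intro l' h x y rest hOk hOk' hch hlen he
    cases l' with
    | nil => rfl
    | cons d' l' =>
      exfalso
      rcases d' with i | j | u <;> simp [run] at he
  | cons d l ih =>
    intro l' h x y rest hOk hOk' hch hlen he
    have hxy : G.Adj x y := (List.isChain_cons_cons.mp hch).1
    cases l' with
    | nil =>
      exfalso
      rcases d with i | j | u <;> simp [run] at he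
    | cons d' l' =>
      -- decompose popping prerequisites lazily
      rcases d with i | j | u <;> rcases d' with i' | j' | u'
      -- lev / lev
      · simp only [run, List.cons.injEq] at he
        obtain ⟨hz, he⟩ := he
        obtain rfl : i = i' := levV_inj hreg hxy hz
        simp only [Ok] at hOk hOk'
        rw [ih l' h (levV v₀ G b x y i) y rest hOk hOk'
          (List.isChain_cons_cons.mpr ⟨(levV_mem hreg hxy i).2.symm, (List.isChain_cons_cons.mp hch).2⟩)
          (by simpa using hlen) he]
      -- lev / up
      · exfalso
        simp only [run, List.cons.injEq] at he
        exact (upV_mem hreg hxy j').2.1 (he.1 ▸ (levV_mem hreg hxy i).2)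
      -- lev / down
      · exfalso
        simp only [run, List.cons.injEq] at he
        exact G.irrefl (he.1 ▸ (levV_mem hreg hxy i).2)
      -- up / lev
      · exfalso
        simp only [run, List.cons.injEq] at he
        exact (upV_mem hreg hxy j).2.1 (he.1.symm ▸ (levV_mem hreg hxy i').2)
      -- up / up
      · simp only [run, List.cons.injEq] at he
        obtain ⟨hz, he⟩ := he
        obtain rfl : j = j' := upV_inj hreg hxy hz
        simp only [Ok] at hOk hOk'
        rw [ih l' (h + 1) (upV v₀ G (a - b - 1) x y j) x (y :: rest) hOk hOk'
          (List.isChain_cons_cons.mpr ⟨(upV_mem hreg hxy j).1.symm, hch⟩)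
          (by simpa using hlen) he]
      -- up / down
      · exfalso
        simp only [run, List.cons.injEq] at he
        exact (upV_mem hreg hxy j).2.2 he.1
      -- down / lev
      · exfalso
        simp only [run, List.cons.injEq] at he
        have hadj := (levV_mem (v₀ := v₀) hreg hxy i').2
        rw [← he.1] at hadj
        exact G.irrefl hadj
      -- down / up
      · exfalso
        simp only [run, List.cons.injEq] at he
        exact (upV_mem hreg hxy j').2.2 he.1.symm
      -- down / down
      · obtain ⟨h', rfl⟩ : ∃ h'', h = h'' + 1 := by
          cases h with
          | zero => exact absurd hOk (by simp [Ok])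
          | succ h'' => exact ⟨h'', rfl⟩
        obtain ⟨r1, rest', rfl⟩ : ∃ r1 rest0, rest = r1 :: rest0 := by
          cases rest with
          | nil => simp at hlen
          | cons r1 rest0 => exact ⟨r1, rest0, rfl⟩
        simp only [run, List.cons.injEq, true_and] at he
        simp only [Ok] at hOk hOk'
        rw [ih l' h' y r1 rest' hOk hOk' (List.isChain_cons_cons.mp hch).2
          (by simpa using hlen) he]

end RunLemmas


section WalkStuff

variable {G : SimpleGraph V}

omit [Fintype V] [DecidableEq V] in
lemma walk_support_inj : ∀ {u v : V} (p q : G.Walk u v), p.support = q.support → p = q := by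
  intro u v p
  induction p with
  | nil =>
    intro q h
    cases q with
    | nil => rfl
    | cons h' q' =>
      exfalso
      simp only [SimpleGraph.Walk.support_nil, SimpleGraph.Walk.support_cons,
        List.cons.injEq] at h
      exact q'.support_ne_nil h.2.symm
  | cons hadj p ih =>
    intro q h
    cases q with
    | nil =>
      exfalso
      simp only [SimpleGraph.Walk.support_nil, SimpleGraph.Walk.support_cons,
        List.cons.injEq] at h
      exact p.support_ne_nil h.2
    | cons hadj' q' =>
      simp only [SimpleGraph.Walk.support_cons, List.cons.injEq, true_and] at h
      have hs := h
      rw [p.support_eq_cons, q'.support_eq_cons] at hs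
      obtain ⟨hv, -⟩ := List.cons_eq_cons.mp hs
      subst hv
      rw [ih q' h]

omit [Fintype V] [DecidableEq V] in
lemma chain_append_single {R : V → V → Prop} :
    ∀ (l : List V) (x z : V), List.Chain R x l → R (l.getLastD x) z →
      List.Chain R x (l ++ [z]) := by
  intro l
  induction l with
  | nil => intro x z _ h2; simpa using List.Chain.cons (by simpa using h2) List.Chain.nil
  | cons y l ih =>
    intro x z h1 h2
    replace h1 := List.chain_cons.mp h1
    refine List.chain_cons.mpr ⟨h1.1, ih y z h1.2 ?_⟩
    rw [List.getLastD_cons] at h2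
    exact h2

omit [Fintype V] [DecidableEq V] in
/-- Build a walk from a chain list. -/
def buildWalk : (x : V) → (l : List V) → List.Chain G.Adj x l →
    G.Walk x ((x :: l).getLast (List.cons_ne_nil _ _))
  | _, [], _ => SimpleGraph.Walk.nil.copy rfl (by simp)
  | x, y :: l, hc =>
    (SimpleGraph.Walk.cons (List.chain_cons.mp hc).1
      (buildWalk y l (List.chain_cons.mp hc).2)).copy rfl
      (List.getLast_cons (List.cons_ne_nil _ _)).symm

omit [Fintype V] [DecidableEq V] in
lemma buildWalk_support : ∀ (x : V) (l : List V) (hc : List.Chain G.Adj x l),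
    (buildWalk x l hc).support = x :: l := by
  intro x l
  induction l generalizing x with
  | nil => intro hc; simp [buildWalk]
  | cons y l ih =>
    intro hc
    simp only [buildWalk, SimpleGraph.Walk.support_copy, SimpleGraph.Walk.support_cons]
    rw [ih y (List.chain_cons.mp hc).2]

end WalkStuff

section Counting

lemma count_ofFn : ∀ (n : ℕ) (f : Fin n → Bool) (x : Bool),
    (List.ofFn f).count x = (Finset.univ.filter fun i => f i = x).card := by
  intro n
  induction n with
  | zero => intro f x; simp
  | succ n ih =>
    intro f x
    rw [List.ofFn_succ, List.count_cons, ih (fun i => f i.succ) x,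
      Finset.card_filter, Finset.card_filter, Fin.sum_univ_succ]
    cases hb : f 0 <;> cases x <;> simp [hb] <;> omega

omit [Fintype V] [DecidableEq V] in
lemma count_bool_len : ∀ (l : List Bool), l.count false + l.count true = l.length := by
  intro l
  induction l with
  | nil => simp
  | cons x l ih => cases x <;> simp [List.count_cons] <;> omega

omit [Fintype V] [DecidableEq V] in
lemma count_dyck_len : ∀ (l : List DyckStep),
    l.count DyckStep.U + l.count DyckStep.D = l.length := by
  intro l
  induction l with
  | nil => simp
  | cons x l ih => cases x <;> simp [List.count_cons, beq_iff_eq] <;> omega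

end Counting


section Assemble

variable {G : SimpleGraph V} {a b : ℕ}

/-- The combinatorial domain: positions, Dyck word, level labels, up labels. -/
abbrev Dom (a b t k : ℕ) :=
  {P : Finset (Fin t) // P.card = 2 * k} × {w : DyckWord // w.semilength = k} ×
    ((Fin (t - 2 * k)) → Fin b) × (Fin k → Fin (a - b - 1))

def theMask (t k : ℕ) (σ : Dom a b t k) : List Bool :=
  List.ofFn fun i : Fin t => decide (i ∈ σ.1.1)

def theList (t k : ℕ) (σ : Dom a b t k) : List (DStep b (a - b - 1)) :=
  encode (theMask t k σ) σ.2.1.1.toList (List.ofFn σ.2.2.1) (List.ofFn σ.2.2.2)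

lemma count_theMask (t k : ℕ) (σ : Dom a b t k) :
    (theMask t k σ).count true = 2 * k ∧ (theMask t k σ).count false = t - 2 * k := by
  have h1 : (theMask t k σ).count true = 2 * k := by
    rw [theMask, count_ofFn]
    have : (Finset.univ.filter fun i : Fin t => decide (i ∈ σ.1.1) = true) = σ.1.1 := by
      ext i; simp
    rw [this, σ.1.2]
  have hlen : (theMask t k σ).length = t := by simp [theMask]
  have := count_bool_len (theMask t k σ)
  exact ⟨h1, by omega⟩

lemma theList_inv (t k : ℕ) (hk : 2 * k ≤ t) (σ : Dom a b t k) :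
    Inv (theMask t k σ) σ.2.1.1.toList (List.ofFn σ.2.2.1) (List.ofFn σ.2.2.2) := by
  obtain ⟨h1, h2⟩ := count_theMask t k σ
  refine ⟨?_, ?_, ?_⟩
  · rw [h2]; simp
  · rw [h1]
    have h3 := σ.2.1.1.two_mul_semilength_eq_length
    rw [σ.2.1.2] at h3
    omega
  · have : σ.2.1.1.toList.count DyckStep.U = σ.2.1.1.semilength := rfl
    rw [this, σ.2.1.2]; simp

lemma theList_ok (t k : ℕ) (hk : 2 * k ≤ t) (σ : Dom a b t k) : Ok 0 (theList t k σ) :=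
  encode_ok _ _ _ _ 0 (theList_inv t k hk σ) (okw_dyck σ.2.1.1)

lemma theList_length (t k : ℕ) (hk : 2 * k ≤ t) (σ : Dom a b t k) :
    (theList t k σ).length = t := by
  rw [theList, encode_length (theList_inv t k hk σ)]; simp [theMask]

lemma theRun_spec (hreg : IsABRegular G a b) {v u₀ : V} (hu₀ : G.Adj v u₀) (t k : ℕ) (hk : 2 * k ≤ t)
    (σ : Dom a b t k) :
    (run v G [u₀, v] (theList t k σ)).length = t ∧
    List.Chain G.Adj u₀ (run v G [u₀, v] (theList t k σ)) ∧
    G.Adj ((run v G [u₀, v] (theList t k σ)).getLastD u₀) v := by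
  have h := run_spec (v₀ := v) hreg (theList t k σ) 0 u₀ v [] (theList_ok t k hk σ)
    (List.isChain_cons_cons.mpr ⟨hu₀.symm, by simp⟩) (by simp)
  refine ⟨?_, h.2.1, ?_⟩
  · rw [h.1, theList_length t k hk σ]
  · simpa using h.2.2

lemma theChain (hreg : IsABRegular G a b) {v u₀ : V} (hu₀ : G.Adj v u₀) (t k : ℕ) (hk : 2 * k ≤ t)
    (σ : Dom a b t k) :
    List.Chain G.Adj v (u₀ :: (run v G [u₀, v] (theList t k σ) ++ [v])) := by
  obtain ⟨h1, h2, h3⟩ := theRun_spec hreg hu₀ t k hk σ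
  exact List.chain_cons.mpr ⟨hu₀, chain_append_single _ _ _ h2 h3⟩

lemma theLast {v u₀ : V} (t k : ℕ) (σ : Dom a b t k) :
    (v :: u₀ :: (run v G [u₀, v] (theList t k σ) ++ [v])).getLast
      (List.cons_ne_nil _ _) = v := by
  have h : ((v :: u₀ :: run v G [u₀, v] (theList t k σ)) ++ [v]).getLast
      (by simp) = v := by
    rw [List.getLast_append_of_ne_nil (h₂ := by simp)]
    simp
  exact h

def mkWalk (hreg : IsABRegular G a b) (v u₀ : V) (hu₀ : G.Adj v u₀) (t k : ℕ) (hk : 2 * k ≤ t)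
    (σ : Dom a b t k) : G.Walk v v :=
  (buildWalk v (u₀ :: (run v G [u₀, v] (theList t k σ) ++ [v]))
    (theChain hreg hu₀ t k hk σ)).copy rfl (theLast t k σ)

lemma mkWalk_support (hreg : IsABRegular G a b) (v u₀ : V) (hu₀ : G.Adj v u₀) (t k : ℕ) (hk : 2 * k ≤ t)
    (σ : Dom a b t k) :
    (mkWalk hreg v u₀ hu₀ t k hk σ).support
      = v :: u₀ :: (run v G [u₀, v] (theList t k σ) ++ [v]) := by
  rw [mkWalk, SimpleGraph.Walk.support_copy, buildWalk_support]

lemma mkWalk_length (hreg : IsABRegular G a b) (v u₀ : V) (hu₀ : G.Adj v u₀) (t k : ℕ) (hk : 2 * k ≤ t)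
    (σ : Dom a b t k) : (mkWalk hreg v u₀ hu₀ t k hk σ).length = t + 2 := by
  have h1 := (mkWalk hreg v u₀ hu₀ t k hk σ).length_support
  rw [mkWalk_support hreg v u₀ hu₀ t k hk σ] at h1
  have h2 := (theRun_spec hreg hu₀ t k hk σ).1
  simp at h1
  omega

lemma key_ineq (hreg : IsABRegular G a b) (hab : b < a) (t : ℕ) (v : V) :
    ∑ k ∈ Finset.range ((t + 1) / 2),
      t.choose (2 * k) * catalan k * b ^ (t - 2 * k) * (a - b - 1) ^ k
      ≤ Fintype.card {p : G.Walk v v // p.length = t + 2} := by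
  obtain ⟨u₀, hu₀⟩ : ∃ u, G.Adj v u := by
    have h := hreg.1 v
    have hpos : 0 < (Finset.univ.filter fun u => G.Adj v u).card := by
      unfold degR at h; omega
    obtain ⟨u, hu⟩ := Finset.card_pos.mp hpos
    exact ⟨u, (Finset.mem_filter.mp hu).2⟩
  have hcard : ∑ k ∈ Finset.range ((t + 1) / 2),
      t.choose (2 * k) * catalan k * b ^ (t - 2 * k) * (a - b - 1) ^ k
      = Fintype.card (Σ k : Fin ((t + 1) / 2), Dom a b t k) := by
    rw [Fintype.card_sigma, ← Fin.sum_univ_eq_sum_range]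
    refine Finset.sum_congr rfl fun k _ => ?_
    rw [Fintype.card_prod, Fintype.card_prod, Fintype.card_prod]
    rw [Fintype.card_finset_len, DyckWord.card_dyckWord_semilength_eq_catalan,
      Fintype.card_fun, Fintype.card_fun]
    simp [Fintype.card_fin]
    ring
  rw [hcard]
  have hk2 : ∀ k : Fin ((t + 1) / 2), 2 * (k : ℕ) ≤ t := by
    intro k
    have := k.2
    omega
  apply Fintype.card_le_of_injective
    (fun σ => ⟨mkWalk hreg v u₀ hu₀ t σ.1 (hk2 σ.1) σ.2,
      mkWalk_length hreg v u₀ hu₀ t σ.1 (hk2 σ.1) σ.2⟩)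
  rintro ⟨k, σ⟩ ⟨k', σ'⟩ hF
  have hw : mkWalk hreg v u₀ hu₀ t k (hk2 k) σ = mkWalk hreg v u₀ hu₀ t k' (hk2 k') σ' :=
    Subtype.ext_iff.mp hF
  have hsup := congrArg SimpleGraph.Walk.support hw
  rw [mkWalk_support hreg v u₀ hu₀ t k (hk2 k) σ,
    mkWalk_support hreg v u₀ hu₀ t k' (hk2 k') σ'] at hsup
  simp only [List.cons.injEq, true_and] at hsup
  have hrun : run v G [u₀, v] (theList t k σ) = run v G [u₀, v] (theList t k' σ') := by
    have := List.append_inj_left hsup ?_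
    · exact this
    · rw [(theRun_spec hreg hu₀ t k (hk2 k) σ).1, (theRun_spec hreg hu₀ t k' (hk2 k') σ').1]
  have hlist : theList t k σ = theList t k' σ' := by
    apply run_inj (v₀ := v) hreg _ _ 0 u₀ v [] (theList_ok t k (hk2 k) σ)
      (theList_ok t k' (hk2 k') σ')
      (List.isChain_cons_cons.mpr ⟨hu₀.symm, by simp⟩) (by simp) hrun
  obtain ⟨hm, hwl, hlv, hup⟩ := encode_inj (theList_inv t k (hk2 k) σ)
    (theList_inv t k' (hk2 k') σ') hlist
  -- k = k'
  have hkk : (k : ℕ) = (k' : ℕ) := by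
    have h1 := (count_theMask t k σ).1
    have h2 := (count_theMask t k' σ').1
    rw [hm] at h1
    omega
  obtain rfl : k = k' := Fin.ext hkk
  -- componentwise equality
  have hP : σ.1 = σ'.1 := by
    apply Subtype.ext
    have hf := List.ofFn_injective hm
    ext i
    have := congrFun hf i
    simpa using this
  have hW : σ.2.1 = σ'.2.1 := Subtype.ext (DyckWord.ext hwl)
  have hLv : σ.2.2.1 = σ'.2.2.1 := List.ofFn_injective hlv
  have hUp : σ.2.2.2 = σ'.2.2.2 := List.ofFn_injective hup
  have : σ = σ' := by
    obtain ⟨P, w, lv, up⟩ := σ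
    obtain ⟨P', w', lv', up'⟩ := σ'
    simp only at hP hW hLv hUp
    simp [hP, hW, hLv, hUp]
  rw [this]

end Assemble


section Final

lemma nat_identity (t k : ℕ) (h2k : 2 * k ≤ t) :
    t.choose (2 * k) * catalan k
      * (k.factorial * k.factorial * (t - 2 * k).factorial * (k + 1)) = t.factorial := by
  have e1 : (k + 1) * catalan k = Nat.centralBinom k :=
    succ_mul_catalan_eq_centralBinom k
  have e2 : Nat.centralBinom k * (k.factorial * k.factorial) = (2 * k).factorial := by
    have h := Nat.choose_mul_factorial_mul_factorial (by omega : k ≤ 2 * k)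
    rw [Nat.centralBinom_eq_two_mul_choose]
    have : 2 * k - k = k := by omega
    rw [this] at h
    calc (2 * k).choose k * (k.factorial * k.factorial)
        = (2 * k).choose k * k.factorial * k.factorial := by ring
      _ = (2 * k).factorial := h
  have e3 : t.choose (2 * k) * (2 * k).factorial * (t - 2 * k).factorial = t.factorial :=
    Nat.choose_mul_factorial_mul_factorial h2k
  calc t.choose (2 * k) * catalan k
        * (k.factorial * k.factorial * (t - 2 * k).factorial * (k + 1))
      = t.choose (2 * k) * (((k + 1) * catalan k) * (k.factorial * k.factorial))
          * (t - 2 * k).factorial := by ring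
    _ = t.choose (2 * k) * (Nat.centralBinom k * (k.factorial * k.factorial))
          * (t - 2 * k).factorial := by rw [e1]
    _ = t.choose (2 * k) * (2 * k).factorial * (t - 2 * k).factorial := by rw [e2]
    _ = t.factorial := e3

lemma term_eq (a b t k : ℕ) (hab : b < a) (h2k : 2 * k ≤ t) :
    (t.factorial : ℝ) / ((k.factorial : ℝ) * k.factorial * (t - 2 * k).factorial)
        * (1 / ((k : ℝ) + 1)) * (b : ℝ) ^ (t - 2 * k) * ((a : ℝ) - b - 1) ^ k
      = ((t.choose (2 * k) * catalan k * b ^ (t - 2 * k) * (a - b - 1) ^ k : ℕ) : ℝ) := by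
  have hc : ((a - b - 1 : ℕ) : ℝ) = (a : ℝ) - b - 1 := by
    have h1 : b + 1 ≤ a := hab
    rw [Nat.sub_sub]
    rw [Nat.cast_sub h1]
    push_cast
    ring
  have hcast := congrArg (fun n : ℕ => (n : ℝ)) (nat_identity t k h2k)
  push_cast at hcast
  have hne1 : ((k.factorial : ℝ) * k.factorial * (t - 2 * k).factorial) ≠ 0 := by
    positivity
  have hne2 : ((k : ℝ) + 1) ≠ 0 := by positivity
  push_cast [hc]
  field_simp
  linear_combination (-((b : ℝ) ^ (t - 2 * k) * ((a : ℝ) - b - 1) ^ k)) * hcast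

end Final

theorem statement4_aux {V : Type} [Fintype V] [DecidableEq V] (G : SimpleGraph V)
    (a b : ℕ) (hab : b < a) (hreg : IsABRegular G a b) (t : ℕ) (ht : 1 ≤ t) :
    (Fintype.card V : ℝ) * ∑ k ∈ Finset.range ((t + 1) / 2),
        (t.factorial : ℝ) / ((k.factorial : ℝ) * k.factorial * (t - 2 * k).factorial)
          * (1 / ((k : ℝ) + 1)) * (b : ℝ) ^ (t - 2 * k) * ((a : ℝ) - b - 1) ^ k
      ≤ Matrix.trace ((Matrix.of fun u v => if G.Adj u v then (1:ℝ) else 0) ^ (t + 2)) := by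
  classical
  have hAdj : (Matrix.of fun u v => if G.Adj u v then (1:ℝ) else 0) = G.adjMatrix ℝ := by
    ext u w
    by_cases h : G.Adj u w <;> simp [SimpleGraph.adjMatrix, h]
  have htr : Matrix.trace ((Matrix.of fun u v => if G.Adj u v then (1:ℝ) else 0) ^ (t + 2))
      = ∑ v : V, (Fintype.card {p : G.Walk v v // p.length = t + 2} : ℝ) := by
    rw [hAdj, Matrix.trace]
    refine Finset.sum_congr rfl fun v _ => ?_
    have := SimpleGraph.adjMatrix_pow_apply_eq_card_walk (G := G) (α := ℝ) (t + 2) v v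
    simp only [Matrix.diag]
    rw [this]
    exact congrArg Nat.cast (Fintype.card_congr (Equiv.refl _))
  rw [htr]
  have hterm : ∑ k ∈ Finset.range ((t + 1) / 2),
      (t.factorial : ℝ) / ((k.factorial : ℝ) * k.factorial * (t - 2 * k).factorial)
        * (1 / ((k : ℝ) + 1)) * (b : ℝ) ^ (t - 2 * k) * ((a : ℝ) - b - 1) ^ k
      = ((∑ k ∈ Finset.range ((t + 1) / 2),
          t.choose (2 * k) * catalan k * b ^ (t - 2 * k) * (a - b - 1) ^ k : ℕ) : ℝ) := by
    rw [Nat.cast_sum]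
    refine Finset.sum_congr rfl fun k hk => ?_
    rw [Finset.mem_range] at hk
    exact term_eq a b t k hab (by omega)
  rw [hterm]
  have hbound : ∀ v : V,
      ((∑ k ∈ Finset.range ((t + 1) / 2),
          t.choose (2 * k) * catalan k * b ^ (t - 2 * k) * (a - b - 1) ^ k : ℕ) : ℝ)
        ≤ (Fintype.card {p : G.Walk v v // p.length = t + 2} : ℝ) := by
    intro v
    exact_mod_cast key_ineq hreg hab t v
  calc (Fintype.card V : ℝ) * ((∑ k ∈ Finset.range ((t + 1) / 2),
          t.choose (2 * k) * catalan k * b ^ (t - 2 * k) * (a - b - 1) ^ k : ℕ) : ℝ)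
      = ∑ _v : V, ((∑ k ∈ Finset.range ((t + 1) / 2),
          t.choose (2 * k) * catalan k * b ^ (t - 2 * k) * (a - b - 1) ^ k : ℕ) : ℝ) := by
        rw [Finset.sum_const, Finset.card_univ, nsmul_eq_mul]
    _ ≤ ∑ v : V, (Fintype.card {p : G.Walk v v // p.length = t + 2} : ℝ) :=
        Finset.sum_le_sum fun v _ => hbound v


end AuxProof

theorem statement4 {V : Type} [Fintype V] [DecidableEq V] (G : SimpleGraph V)
    (a b : ℕ) (hab : b < a) (hreg : IsABRegular G a b) (t : ℕ) (ht : 1 ≤ t) :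
    (Fintype.card V : ℝ) * ∑ k ∈ Finset.range ((t + 1) / 2),
        (t.factorial : ℝ) / ((k.factorial : ℝ) * k.factorial * (t - 2 * k).factorial)
          * (1 / ((k : ℝ) + 1)) * (b : ℝ) ^ (t - 2 * k) * ((a : ℝ) - b - 1) ^ k
      ≤ Matrix.trace (adjMat G ^ (t + 2)) := by
  exact statement4_aux G a b hab hreg t ht

end PaperStmt
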